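/- Let M ≥ 0, let f : [0,∞) → H be continuous with ‖f(s)‖ ≤ M for all s, let x ∈ H, and define X(t) = S(t)x + ∫₀^t S(t−s) f(s) ds for t ≥ 0 (Bochner integral in H). Then for every r ∈ (0,1) there exists a constant C (depending only on r, λ₀ and M) such that for all 0 < s ≤ t, ‖X(t) − X(s)‖ ≤ C (t−s)^{1−r} (1 + s^{-(1−r)}) (1 + ‖x‖). -/

import Mathlib

open Real MeasureTheory Set Filter
open scoped ENNReal Topology

noncomputable section

/-- `Hsp` is the real Hilbert space `ℓ²` of square-summable real sequences. -/
abbrev Hsp : Type := lp (fun _ : ℕ => ℝ) 2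


lemma aux_norm_le (y z : Hsp) (c : ℝ) (hc : 0 ≤ c) (h : ∀ k, |y k| ≤ c * |z k|) :
    ‖y‖ ≤ c * ‖z‖ := by
  have h2 : (0:ℝ) < (2:ℝ≥0∞).toReal := by norm_num
  have hy := lp.norm_rpow_eq_tsum h2 y
  have hsy : Summable fun k => ‖y k‖ ^ ((2:ℝ≥0∞).toReal) := (lp.memℓp y).summable h2
  have hsz : Summable fun k => ‖z k‖ ^ ((2:ℝ≥0∞).toReal) := (lp.memℓp z).summable h2
  have htr : ((2:ℝ≥0∞)).toReal = (2:ℝ) := by norm_num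
  rw [htr] at hy hsy hsz
  simp only [Real.rpow_two] at hy hsy hsz
  have hsq : ‖y‖ ^ 2 ≤ (c * ‖z‖) ^ 2 := by
    rw [hy, mul_pow]
    have hz := lp.norm_rpow_eq_tsum h2 z
    rw [htr] at hz
    simp only [Real.rpow_two] at hz
    rw [hz, ← tsum_mul_left]
    refine hsy.tsum_le_tsum (fun k => ?_) (hsz.mul_left _)
    have := h k
    have h1 : ‖y k‖ ^ 2 ≤ (c * |z k|) ^ 2 := by
      rw [Real.norm_eq_abs]
      exact pow_le_pow_left₀ (abs_nonneg _) this 2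
    calc ‖y k‖ ^ 2 ≤ (c * |z k|) ^ 2 := h1
      _ = c ^ 2 * ‖z k‖ ^ 2 := by rw [Real.norm_eq_abs]; ring
  exact le_of_pow_le_pow_left₀ two_ne_zero (by positivity) hsq

lemma aux_one_sub_exp_le {a b : ℝ} (ha : 0 ≤ a) (hb0 : 0 < b) (hb1 : b ≤ 1) :
    1 - Real.exp (-a) ≤ a ^ b := by
  rcases eq_or_lt_of_le ha with rfl | ha'
  · simp [Real.zero_rpow hb0.ne']
  rcases le_or_gt a 1 with h1 | h1
  · have h2 : 1 - Real.exp (-a) ≤ a := by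
      have := Real.add_one_le_exp (-a); linarith
    refine h2.trans ?_
    calc a = a ^ (1:ℝ) := (Real.rpow_one a).symm
      _ ≤ a ^ b := Real.rpow_le_rpow_of_exponent_ge ha' h1 hb1
  · have h2 : 1 - Real.exp (-a) ≤ 1 := by
      have := Real.exp_pos (-a); linarith
    refine h2.trans ?_
    calc (1:ℝ) = 1 ^ b := (Real.one_rpow b).symm
      _ ≤ a ^ b := Real.rpow_le_rpow zero_le_one h1.le hb0.le

lemma aux_rpow_le_exp {a b : ℝ} (ha : 0 ≤ a) (hb0 : 0 ≤ b) (hb1 : b ≤ 1) :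
    a ^ b ≤ Real.exp a := by
  rcases le_or_gt a 1 with h1 | h1
  · have : a ^ b ≤ 1 := Real.rpow_le_one ha h1 hb0
    refine this.trans ?_
    have := Real.add_one_le_exp a; linarith
  · have h2 : a ^ b ≤ a ^ (1:ℝ) :=
      Real.rpow_le_rpow_of_exponent_le h1.le hb1
    rw [Real.rpow_one] at h2
    refine h2.trans ?_
    have := Real.add_one_le_exp a; linarith

lemma aux_key1 {l s b : ℝ} (hl : 0 ≤ l) (hs : 0 < s) (hb0 : 0 ≤ b) (hb1 : b ≤ 1) :
    l ^ b * Real.exp (-(l * s)) ≤ s ^ (-b) := by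
  have hsb : (0:ℝ) < s ^ b := Real.rpow_pos_of_pos hs b
  have key : l ^ b * Real.exp (-(l * s)) * s ^ b ≤ 1 := by
    rw [mul_right_comm, ← Real.mul_rpow hl hs.le, Real.exp_neg, ← div_eq_mul_inv,
      div_le_one (Real.exp_pos _)]
    exact aux_rpow_le_exp (by positivity) hb0 hb1
  rw [Real.rpow_neg hs.le, ← one_div, le_div_iff₀ hsb]
  exact key

lemma aux_key2 {lam0 l s b : ℝ} (hl0 : 0 < lam0) (hl : lam0 ≤ l) (hs : 0 < s)
    (hb0 : 0 ≤ b) (hb1 : b ≤ 1) :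
    l ^ b * Real.exp (-(l * s)) ≤ (s/2) ^ (-b) * Real.exp (-(lam0 * (s/2))) := by
  have h1 : Real.exp (-(l * s)) = Real.exp (-(l * (s/2))) * Real.exp (-(l * (s/2))) := by
    rw [← Real.exp_add]; ring_nf
  rw [h1, ← mul_assoc]
  have h2 : l ^ b * Real.exp (-(l * (s/2))) ≤ (s/2) ^ (-b) :=
    aux_key1 (hl0.le.trans hl) (by positivity) hb0 hb1
  have h3 : Real.exp (-(l * (s/2))) ≤ Real.exp (-(lam0 * (s/2))) := by
    apply Real.exp_le_exp.mpr; nlinarith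
  exact mul_le_mul h2 h3 (Real.exp_pos _).le (by positivity)

set_option maxHeartbeats 1000000 in
/-- Deterministic content of Proposition A.3 (time-Hölder regularity of the slow component):
for `X(t) = S(t)x + ∫₀ᵗ S(t−s) f(s) ds` with `‖f‖ ≤ M`, and `r ∈ (0,1)`, there is a
constant `C` (depending only on `r`, `λ₀`, `M`) with
`‖X(t) − X(s)‖ ≤ C (t−s)^{1−r} (1 + s^{-(1−r)}) (1 + ‖x‖)` for `0 < s ≤ t`. -/
theorem stmt9
    (lam : ℕ → ℝ) (lam0 : ℝ) (hlam0 : 0 < lam0) (hlam : ∀ k, lam0 ≤ lam k)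
    (S : ℝ → Hsp → Hsp)
    (hS : ∀ t : ℝ, 0 ≤ t → ∀ (x : Hsp) (k : ℕ), S t x k = Real.exp (-(lam k * t)) * x k)
    (M : ℝ) (hM : 0 ≤ M)
    (r : ℝ) (hr : r ∈ Set.Ioo (0:ℝ) 1) :
    ∃ C > 0, ∀ f : ℝ → Hsp, ContinuousOn f (Set.Ici 0) → (∀ s : ℝ, 0 ≤ s → ‖f s‖ ≤ M) →
      ∀ x : Hsp, ∀ X : ℝ → Hsp,
      (∀ t : ℝ, 0 ≤ t → X t = S t x + ∫ s in (0:ℝ)..t, S (t - s) (f s)) →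
      ∀ s t : ℝ, 0 < s → s ≤ t →
        ‖X t - X s‖ ≤ C * (t - s) ^ (1 - r) * (1 + s ^ (-(1 - r))) * (1 + ‖x‖) := by
  obtain ⟨hr0, hr1⟩ := hr
  set β : ℝ := 1 - r with hβdef
  have hβ0 : 0 < β := by rw [hβdef]; linarith
  have hβ1 : β < 1 := by rw [hβdef]; linarith
  have hlampos : ∀ k, 0 < lam k := fun k => lt_of_lt_of_le hlam0 (hlam k)
  -- coordinates of a difference
  have hdc : ∀ (y z : Hsp) (k : ℕ), (y - z) k = y k - z k := by
    intro y z k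
    have := lp.coeFn_sub y z
    rw [show ((y - z : Hsp) : ∀ _ : ℕ, ℝ) k = ((y : ∀ _ : ℕ, ℝ) - (z : ∀ _ : ℕ, ℝ)) k from
      congrFun this k]
    rfl
  -- S τ is linear on differences
  have hsub : ∀ τ : ℝ, 0 ≤ τ → ∀ y z : Hsp, S τ y - S τ z = S τ (y - z) := by
    intro τ hτ y z
    apply lp.ext; funext k
    show (S τ y - S τ z) k = S τ (y - z) k
    rw [hdc, hS τ hτ, hS τ hτ, hS τ hτ, hdc]; ring
  -- contraction bound
  have hcontract : ∀ τ : ℝ, 0 ≤ τ → ∀ y : Hsp, ‖S τ y‖ ≤ Real.exp (-(lam0 * τ)) * ‖y‖ := by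
    intro τ hτ y
    apply aux_norm_le _ _ _ (Real.exp_pos _).le
    intro k
    rw [hS τ hτ, abs_mul, Real.abs_exp]
    exact mul_le_mul_of_nonneg_right (Real.exp_le_exp.mpr (by nlinarith [hlam k])) (abs_nonneg _)
  have hcontract1 : ∀ τ : ℝ, 0 ≤ τ → ∀ y : Hsp, ‖S τ y‖ ≤ ‖y‖ := by
    intro τ hτ y
    refine (hcontract τ hτ y).trans ?_
    have h1 : Real.exp (-(lam0 * τ)) ≤ 1 := Real.exp_le_one_iff.mpr (by nlinarith)
    nlinarith [norm_nonneg y]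
  -- coordinate of semigroup difference
  have hdcoord : ∀ τ₁ τ₂ : ℝ, 0 ≤ τ₁ → τ₁ ≤ τ₂ → ∀ (y : Hsp) (k : ℕ),
      |(S τ₂ y - S τ₁ y) k| =
        (Real.exp (-(lam k * τ₁)) - Real.exp (-(lam k * τ₂))) * |y k| := by
    intro τ₁ τ₂ h1 h12 y k
    rw [hdc, hS τ₂ (h1.trans h12), hS τ₁ h1, ← sub_mul, abs_mul]
    congr 1
    rw [abs_sub_comm, abs_of_nonneg]
    have : Real.exp (-(lam k * τ₂)) ≤ Real.exp (-(lam k * τ₁)) :=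
      Real.exp_le_exp.mpr (by nlinarith [hlampos k])
    linarith
  -- scalar estimate on exponential differences
  have hEbound : ∀ τ₁ τ₂ : ℝ, 0 ≤ τ₁ → τ₁ ≤ τ₂ → ∀ k : ℕ,
      Real.exp (-(lam k * τ₁)) - Real.exp (-(lam k * τ₂)) ≤
        (τ₂ - τ₁) ^ β * (lam k ^ β * Real.exp (-(lam k * τ₁))) := by
    intro τ₁ τ₂ h1 h12 k
    have hsplit : Real.exp (-(lam k * τ₂)) =
        Real.exp (-(lam k * τ₁)) * Real.exp (-(lam k * (τ₂ - τ₁))) := by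
      rw [← Real.exp_add]; ring_nf
    rw [hsplit]
    have h2 : 1 - Real.exp (-(lam k * (τ₂ - τ₁))) ≤ (lam k * (τ₂ - τ₁)) ^ β :=
      aux_one_sub_exp_le (by nlinarith [hlampos k]) hβ0 hβ1.le
    have h3 : Real.exp (-(lam k * τ₁)) * (1 - Real.exp (-(lam k * (τ₂ - τ₁)))) ≤
        Real.exp (-(lam k * τ₁)) * (lam k * (τ₂ - τ₁)) ^ β := by
      exact mul_le_mul_of_nonneg_left h2 (Real.exp_pos _).le
    calc Real.exp (-(lam k * τ₁)) - Real.exp (-(lam k * τ₁)) * Real.exp (-(lam k * (τ₂ - τ₁)))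
        = Real.exp (-(lam k * τ₁)) * (1 - Real.exp (-(lam k * (τ₂ - τ₁)))) := by ring
      _ ≤ Real.exp (-(lam k * τ₁)) * (lam k * (τ₂ - τ₁)) ^ β := h3
      _ = (τ₂ - τ₁) ^ β * (lam k ^ β * Real.exp (-(lam k * τ₁))) := by
          rw [Real.mul_rpow (hlampos k).le (by linarith)]; ring
  -- Hölder estimates for the semigroup
  have hhol : ∀ τ₁ τ₂ : ℝ, 0 < τ₁ → τ₁ ≤ τ₂ → ∀ y : Hsp,
      ‖S τ₂ y - S τ₁ y‖ ≤ (τ₂ - τ₁) ^ β * τ₁ ^ (-β) * ‖y‖ := by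
    intro τ₁ τ₂ h1 h12 y
    apply aux_norm_le _ _ _
      (mul_nonneg (Real.rpow_nonneg (by linarith) _) (Real.rpow_nonneg h1.le _))
    intro k
    rw [hdcoord τ₁ τ₂ h1.le h12 y k]
    apply mul_le_mul_of_nonneg_right _ (abs_nonneg _)
    refine (hEbound τ₁ τ₂ h1.le h12 k).trans ?_
    apply mul_le_mul_of_nonneg_left _ (Real.rpow_nonneg (by linarith) _)
    exact aux_key1 (hlampos k).le h1 hβ0.le hβ1.le
  have hhol2 : ∀ τ₁ τ₂ : ℝ, 0 < τ₁ → τ₁ ≤ τ₂ → ∀ y : Hsp,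
      ‖S τ₂ y - S τ₁ y‖ ≤
        (τ₂ - τ₁) ^ β * ((τ₁/2) ^ (-β) * Real.exp (-(lam0 * (τ₁/2)))) * ‖y‖ := by
    intro τ₁ τ₂ h1 h12 y
    apply aux_norm_le _ _ _
      (mul_nonneg (Real.rpow_nonneg (by linarith) _)
        (mul_nonneg (Real.rpow_nonneg (by positivity) _) (Real.exp_pos _).le))
    intro k
    rw [hdcoord τ₁ τ₂ h1.le h12 y k]
    apply mul_le_mul_of_nonneg_right _ (abs_nonneg _)
    refine (hEbound τ₁ τ₂ h1.le h12 k).trans ?_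
    apply mul_le_mul_of_nonneg_left _ (Real.rpow_nonneg (by linarith) _)
    exact aux_key2 hlam0 (hlam k) h1 hβ0.le hβ1.le
  -- continuity of τ ↦ S τ y on [0, ∞)
  have hScont : ∀ (y : Hsp) (τ₀ : ℝ), 0 ≤ τ₀ →
      Tendsto (fun τ => S τ y) (𝓝[Set.Ici (0:ℝ)] τ₀) (𝓝 (S τ₀ y)) := by
    intro y τ₀ hτ₀
    have h2 : (0:ℝ) < (2:ℝ≥0∞).toReal := by norm_num
    have hsum : Summable fun k => (y k) ^ 2 := by
      have := (lp.memℓp y).summable h2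
      refine this.congr fun k => ?_
      rw [show ((2:ℝ≥0∞)).toReal = (2:ℝ) by norm_num, Real.rpow_two, Real.norm_eq_abs, sq_abs]
    have hab : ∀ k : ℕ, Tendsto
        (fun τ => ((Real.exp (-(lam k * τ)) - Real.exp (-(lam k * τ₀))) * y k) ^ 2)
        (𝓝[Set.Ici (0:ℝ)] τ₀) (𝓝 ((fun _ : ℕ => (0:ℝ)) k)) := by
      intro k
      have hc : Continuous fun τ : ℝ =>
          ((Real.exp (-(lam k * τ)) - Real.exp (-(lam k * τ₀))) * y k) ^ 2 := by
        apply Continuous.pow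
        apply Continuous.mul _ continuous_const
        apply Continuous.sub _ continuous_const
        exact Real.continuous_exp.comp (continuous_const.mul continuous_id).neg
      have h3 : Tendsto (fun τ => ((Real.exp (-(lam k * τ)) - Real.exp (-(lam k * τ₀))) * y k) ^ 2)
          (𝓝[Set.Ici (0:ℝ)] τ₀)
          (𝓝 (((Real.exp (-(lam k * τ₀)) - Real.exp (-(lam k * τ₀))) * y k) ^ 2)) :=
        (hc.tendsto τ₀).mono_left nhdsWithin_le_nhds
      simpa using h3
    have hbound : ∀ᶠ τ in (𝓝[Set.Ici (0:ℝ)] τ₀), ∀ k : ℕ,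
        ‖((Real.exp (-(lam k * τ)) - Real.exp (-(lam k * τ₀))) * y k) ^ 2‖ ≤ (y k) ^ 2 := by
      filter_upwards [eventually_mem_nhdsWithin] with τ hτ k
      have he1 : Real.exp (-(lam k * τ)) ≤ 1 :=
        Real.exp_le_one_iff.mpr (by nlinarith [hlampos k, Set.mem_Ici.mp hτ])
      have he2 : Real.exp (-(lam k * τ₀)) ≤ 1 :=
        Real.exp_le_one_iff.mpr (by nlinarith [hlampos k])
      have hp1 := (Real.exp_pos (-(lam k * τ))).le
      have hp2 := (Real.exp_pos (-(lam k * τ₀))).le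
      rw [Real.norm_eq_abs, abs_of_nonneg (sq_nonneg _), mul_pow]
      have habs : (Real.exp (-(lam k * τ)) - Real.exp (-(lam k * τ₀)))^2 ≤ 1 := by nlinarith
      calc (Real.exp (-(lam k * τ)) - Real.exp (-(lam k * τ₀)))^2 * (y k)^2
          ≤ 1 * (y k)^2 := mul_le_mul_of_nonneg_right habs (sq_nonneg _)
        _ = (y k)^2 := one_mul _
    have htsum := tendsto_tsum_of_dominated_convergence hsum hab hbound
    simp only [tsum_zero] at htsum
    have hsq : ∀ τ : ℝ, 0 ≤ τ → ‖S τ y - S τ₀ y‖ =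
        Real.sqrt (∑' k, ((Real.exp (-(lam k * τ)) - Real.exp (-(lam k * τ₀))) * y k) ^ 2) := by
      intro τ hτ
      have hn : ‖S τ y - S τ₀ y‖ ^ 2 =
          ∑' k, ((Real.exp (-(lam k * τ)) - Real.exp (-(lam k * τ₀))) * y k) ^ 2 := by
        have h4 := lp.norm_rpow_eq_tsum h2 (S τ y - S τ₀ y)
        rw [show ((2:ℝ≥0∞)).toReal = (2:ℝ) by norm_num] at h4
        simp only [Real.rpow_two] at h4
        rw [h4]
        congr 1; funext k
        rw [Real.norm_eq_abs, sq_abs, hdc, hS τ hτ, hS τ₀ hτ₀]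
        ring
      rw [← hn, Real.sqrt_sq (norm_nonneg _)]
    rw [tendsto_iff_norm_sub_tendsto_zero]
    have hsqrt := (Real.continuous_sqrt.tendsto 0).comp htsum
    rw [Real.sqrt_zero] at hsqrt
    apply hsqrt.congr'
    filter_upwards [eventually_mem_nhdsWithin] with τ hτ
    exact (hsq τ (Set.mem_Ici.mp hτ)).symm
  -- the integrable comparison function and its integral
  set ψ : ℝ → ℝ := fun v => (v/2) ^ (-β) * Real.exp (-(lam0 * (v/2))) with hψdef
  have hψint : IntegrableOn ψ (Set.Ioi (0:ℝ)) := by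
    have base : IntegrableOn (fun v : ℝ => v ^ (-β) * Real.exp (-(lam0/2) * v ^ (1:ℝ)))
        (Set.Ioi 0) :=
      integrableOn_rpow_mul_exp_neg_mul_rpow (by linarith) zero_lt_one (by positivity)
    have base2 : IntegrableOn
        (fun v : ℝ => (2:ℝ)^β * (v ^ (-β) * Real.exp (-(lam0/2) * v ^ (1:ℝ)))) (Set.Ioi 0) :=
      base.const_mul _
    refine base2.congr_fun ?_ measurableSet_Ioi
    intro v hv
    have hv0 : (0:ℝ) < v := hv
    show (2:ℝ)^β * (v ^ (-β) * Real.exp (-(lam0/2) * v ^ (1:ℝ))) = ψ v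
    simp only [hψdef]
    have h1 : (v/2) ^ (-β) = (2:ℝ)^β * v ^ (-β) := by
      rw [Real.div_rpow hv0.le (by norm_num), Real.rpow_neg (by norm_num : (0:ℝ) ≤ 2),
        div_eq_mul_inv, inv_inv, mul_comm]
    have h2 : -(lam0/2) * v ^ (1:ℝ) = -(lam0 * (v/2)) := by rw [Real.rpow_one]; ring
    rw [h2, h1]
    ring
  set K : ℝ := ∫ v in Set.Ioi (0:ℝ), ψ v with hKdef
  have hψ0 : ∀ v, 0 < v → 0 ≤ ψ v := by
    intro v hv
    rw [hψdef]
    positivity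
  have hK0 : 0 ≤ K := by
    rw [hKdef]
    apply setIntegral_nonneg measurableSet_Ioi
    intro v hv; exact hψ0 v hv
  set c1 : ℝ := (1/lam0) ^ (1-β) with hc1def
  have hc10 : 0 < c1 := by rw [hc1def]; positivity
  refine ⟨1 + M * K + M * c1, by nlinarith, ?_⟩
  intro f hfc hfM x X hX s t hs0 hst
  rcases eq_or_lt_of_le hst with rfl | hst'
  · simp [Real.zero_rpow hβ0.ne']
  have hts : 0 < t - s := by linarith
  have ht0 : (0:ℝ) ≤ t := by linarith
  -- continuity of the integrands
  have hgc : ∀ T : ℝ, 0 ≤ T → ContinuousOn (fun u => S (T - u) (f u)) (Set.Icc 0 T) := by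
    intro T hT u₀ hu₀
    obtain ⟨hu₀0, hu₀T⟩ := hu₀
    have hTu₀ : 0 ≤ T - u₀ := by linarith
    have hfrozen : Tendsto (fun u => S (T - u) (f u₀)) (𝓝[Set.Icc 0 T] u₀)
        (𝓝 (S (T - u₀) (f u₀))) := by
      have hmap : Tendsto (fun u : ℝ => T - u) (𝓝[Set.Icc 0 T] u₀)
          (𝓝[Set.Ici (0:ℝ)] (T - u₀)) := by
        apply tendsto_nhdsWithin_of_tendsto_nhds_of_eventually_within
        · exact ((continuous_const.sub continuous_id).tendsto u₀).mono_left nhdsWithin_le_nhds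
        · filter_upwards [eventually_mem_nhdsWithin] with u hu
          exact Set.mem_Ici.mpr (by linarith [hu.2])
      exact (hScont (f u₀) (T - u₀) hTu₀).comp hmap
    have hfu : Tendsto f (𝓝[Set.Icc 0 T] u₀) (𝓝 (f u₀)) := by
      have h5 := hfc u₀ (Set.mem_Ici.mpr hu₀0)
      exact h5.mono_left (nhdsWithin_mono _ (fun v hv => Set.mem_Ici.mpr hv.1))
    rw [ContinuousWithinAt, tendsto_iff_norm_sub_tendsto_zero]
    have hb : Tendsto (fun u => ‖f u - f u₀‖ + ‖S (T - u) (f u₀) - S (T - u₀) (f u₀)‖)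
        (𝓝[Set.Icc 0 T] u₀) (𝓝 0) := by
      have h1 := tendsto_iff_norm_sub_tendsto_zero.mp hfu
      have h2 := tendsto_iff_norm_sub_tendsto_zero.mp hfrozen
      simpa using h1.add h2
    apply squeeze_zero' ?_ ?_ hb
    · filter_upwards with u; positivity
    · filter_upwards [eventually_mem_nhdsWithin] with u hu
      have hTu : 0 ≤ T - u := by linarith [hu.2]
      calc ‖S (T - u) (f u) - S (T - u₀) (f u₀)‖
          = dist (S (T - u) (f u)) (S (T - u₀) (f u₀)) := (dist_eq_norm _ _).symm
        _ ≤ dist (S (T - u) (f u)) (S (T - u) (f u₀)) +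
              dist (S (T - u) (f u₀)) (S (T - u₀) (f u₀)) := dist_triangle _ _ _
        _ ≤ ‖f u - f u₀‖ + ‖S (T - u) (f u₀) - S (T - u₀) (f u₀)‖ := by
            rw [dist_eq_norm, dist_eq_norm]
            have h6 := hcontract1 (T - u) hTu (f u - f u₀)
            rw [← hsub (T - u) hTu] at h6
            linarith
  -- interval integrability
  have hgint : ∀ T a b : ℝ, 0 ≤ T → a ∈ Set.Icc 0 T → b ∈ Set.Icc 0 T →
      IntervalIntegrable (fun u => S (T - u) (f u)) volume a b := by
    intro T a b hT ha hb
    exact ((hgc T hT).mono (Set.uIcc_subset_Icc ha hb)).intervalIntegrable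
  have Igs : IntervalIntegrable (fun u => S (t - u) (f u)) volume 0 s :=
    hgint t 0 s ht0 ⟨le_rfl, ht0⟩ ⟨hs0.le, hst⟩
  have Igst : IntervalIntegrable (fun u => S (t - u) (f u)) volume s t :=
    hgint t s t ht0 ⟨hs0.le, hst⟩ ⟨ht0, le_rfl⟩
  have Ihs : IntervalIntegrable (fun u => S (s - u) (f u)) volume 0 s :=
    hgint s 0 s hs0.le ⟨le_rfl, hs0.le⟩ ⟨hs0.le, le_rfl⟩
  -- decomposition
  have hdecomp : X t - X s =
      (S t x - S s x) + ((∫ u in (0:ℝ)..s, (S (t - u) (f u) - S (s - u) (f u))) +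
        ∫ u in s..t, S (t - u) (f u)) := by
    rw [hX t ht0, hX s hs0.le, intervalIntegral.integral_sub Igs Ihs,
      ← intervalIntegral.integral_add_adjacent_intervals Igs Igst]
    abel
  -- bound A
  have hA : ‖S t x - S s x‖ ≤ (t - s) ^ β * s ^ (-β) * ‖x‖ := hhol s t hs0 hst x
  -- bound B
  have hB : ‖∫ u in (0:ℝ)..s, (S (t - u) (f u) - S (s - u) (f u))‖ ≤ M * (t - s) ^ β * K := by
    have hψints : IntervalIntegrable ψ volume 0 s := by
      rw [intervalIntegrable_iff_integrableOn_Ioc_of_le hs0.le]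
      exact hψint.mono_set Set.Ioc_subset_Ioi_self
    have hφint : IntervalIntegrable (fun u => M * (t - s) ^ β * ψ (s - u)) volume 0 s := by
      have h7 := hψints.comp_sub_left s
      simp only [sub_zero, sub_self] at h7
      exact (h7.symm).const_mul _
    have hae : ∀ᵐ u ∂(volume.restrict (Set.uIoc 0 s)),
        ‖S (t - u) (f u) - S (s - u) (f u)‖ ≤ M * (t - s) ^ β * ψ (s - u) := by
      have hne : ∀ᵐ u : ℝ ∂volume, u ≠ s := by
        rw [ae_iff]
        have : {u : ℝ | ¬ u ≠ s} = {s} := by ext u; simp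
        rw [this]
        exact Real.volume_singleton
      filter_upwards [ae_restrict_of_ae hne, ae_restrict_mem measurableSet_uIoc] with u hus hu
      rw [Set.uIoc_of_le hs0.le] at hu
      obtain ⟨hu0, hus'⟩ := hu
      have hult : u < s := lt_of_le_of_ne hus' hus
      have h1 := hhol2 (s - u) (t - u) (by linarith) (by linarith) (f u)
      have heq : (t - u) - (s - u) = t - s := by ring
      rw [heq] at h1
      refine h1.trans ?_
      simp only [hψdef]
      have hfb := hfM u (by linarith)
      have hψnn : 0 ≤ ((s-u)/2) ^ (-β) * Real.exp (-(lam0 * ((s-u)/2))) :=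
        mul_nonneg (Real.rpow_nonneg (by linarith) _) (Real.exp_pos _).le
      calc (t - s) ^ β * (((s-u)/2) ^ (-β) * Real.exp (-(lam0 * ((s-u)/2)))) * ‖f u‖
          ≤ (t - s) ^ β * (((s-u)/2) ^ (-β) * Real.exp (-(lam0 * ((s-u)/2)))) * M :=
            mul_le_mul_of_nonneg_left hfb
              (mul_nonneg (Real.rpow_nonneg hts.le _) hψnn)
        _ = M * (t - s) ^ β * (((s-u)/2) ^ (-β) * Real.exp (-(lam0 * ((s-u)/2)))) := by ring
    refine (intervalIntegral.norm_integral_le_abs_of_norm_le hae hφint).trans ?_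
    have hnn : 0 ≤ ∫ u in (0:ℝ)..s, M * (t - s) ^ β * ψ (s - u) := by
      apply intervalIntegral.integral_nonneg hs0.le
      intro u hu
      have h12 : 0 ≤ ψ (s - u) := by
        simp only [hψdef]
        exact mul_nonneg (Real.rpow_nonneg (by linarith [hu.2]) _) (Real.exp_pos _).le
      have h13 : 0 ≤ M * (t - s) ^ β := mul_nonneg hM (Real.rpow_nonneg hts.le _)
      exact mul_nonneg h13 h12
    rw [abs_of_nonneg hnn, intervalIntegral.integral_const_mul,
      intervalIntegral.integral_comp_sub_left ψ s]
    simp only [sub_zero, sub_self]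
    apply mul_le_mul_of_nonneg_left _ (by positivity)
    rw [intervalIntegral.integral_of_le hs0.le, hKdef]
    apply setIntegral_mono_set hψint
    · filter_upwards [ae_restrict_mem measurableSet_Ioi] with v hv
      exact hψ0 v hv
    · exact HasSubset.Subset.eventuallyLE Set.Ioc_subset_Ioi_self
  -- bound D
  have hgub : ∀ u ∈ Set.uIoc s t, ‖S (t - u) (f u)‖ ≤ M := by
    intro u hu
    rw [Set.uIoc_of_le hst] at hu
    refine (hcontract1 (t - u) (by linarith [hu.2]) (f u)).trans ?_
    exact hfM u (by linarith [hu.1])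
  have hD : ‖∫ u in s..t, S (t - u) (f u)‖ ≤ M * c1 * (t - s) ^ β := by
    rcases le_or_gt (t - s) (1/lam0) with hcase | hcase
    · have h1 := intervalIntegral.norm_integral_le_of_norm_le_const hgub
      rw [abs_of_nonneg hts.le] at h1
      refine h1.trans ?_
      have h3 : t - s = (t - s) ^ β * (t - s) ^ (1 - β) := by
        rw [← Real.rpow_add hts]
        norm_num
      have h2 : (t - s) ^ (1 - β) ≤ c1 := by
        rw [hc1def]
        exact Real.rpow_le_rpow hts.le hcase (by linarith)
      calc M * (t - s) = M * ((t - s) ^ β * (t - s) ^ (1 - β)) := by rw [← h3]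
        _ ≤ M * ((t - s) ^ β * c1) :=
            mul_le_mul_of_nonneg_left
              (mul_le_mul_of_nonneg_left h2 (Real.rpow_nonneg hts.le _)) hM
        _ = M * c1 * (t - s) ^ β := by ring
    · -- exponential decay case
      have hexpder : ∀ u ∈ Set.uIcc s t,
          HasDerivAt (fun u : ℝ => Real.exp (lam0 * u - lam0 * t) / lam0)
            (Real.exp (-(lam0 * (t - u)))) u := by
        intro u hu
        have hlin : HasDerivAt (fun u : ℝ => lam0 * u - lam0 * t) lam0 u := by
          simpa using ((hasDerivAt_id u).const_mul lam0).sub_const (lam0 * t)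
        have hder := (hlin.exp).div_const lam0
        refine hder.congr_deriv ?_
        rw [show -(lam0 * (t - u)) = lam0 * u - lam0 * t by ring,
          mul_div_assoc, div_self hlam0.ne', mul_one]
      have hexpcont : IntervalIntegrable (fun u : ℝ => Real.exp (-(lam0 * (t - u))))
          volume s t := by
        apply Continuous.intervalIntegrable
        exact Real.continuous_exp.comp (continuous_const.mul (continuous_const.sub continuous_id)).neg
      have hexpint : ∫ u in s..t, Real.exp (-(lam0 * (t - u))) =
          Real.exp (lam0 * t - lam0 * t) / lam0 - Real.exp (lam0 * s - lam0 * t) / lam0 :=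
        intervalIntegral.integral_eq_sub_of_hasDerivAt hexpder hexpcont
      have hexple : ∫ u in s..t, Real.exp (-(lam0 * (t - u))) ≤ 1/lam0 := by
        rw [hexpint]
        have : Real.exp (lam0 * t - lam0 * t) = 1 := by rw [sub_self, Real.exp_zero]
        rw [this]
        have := (Real.exp_pos (lam0 * s - lam0 * t)).le
        have h8 : 0 ≤ Real.exp (lam0 * s - lam0 * t) / lam0 := by positivity
        linarith [one_div lam0]
      have haeD : ∀ᵐ u ∂(volume.restrict (Set.uIoc s t)),
          ‖S (t - u) (f u)‖ ≤ M * Real.exp (-(lam0 * (t - u))) := by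
        filter_upwards [ae_restrict_mem measurableSet_uIoc] with u hu
        rw [Set.uIoc_of_le hst] at hu
        have htu : 0 ≤ t - u := by linarith [hu.2]
        refine (hcontract (t - u) htu (f u)).trans ?_
        rw [mul_comm]
        exact mul_le_mul_of_nonneg_right (hfM u (by linarith [hu.1])) (Real.exp_pos _).le
      have hDint : IntervalIntegrable (fun u : ℝ => M * Real.exp (-(lam0 * (t - u))))
          volume s t := hexpcont.const_mul _
      refine (intervalIntegral.norm_integral_le_abs_of_norm_le haeD hDint).trans ?_
      rw [intervalIntegral.integral_const_mul]
      have hintnn : 0 ≤ ∫ u in s..t, Real.exp (-(lam0 * (t - u))) := by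
        apply intervalIntegral.integral_nonneg hst
        intro u hu; positivity
      rw [abs_of_nonneg (by positivity)]
      have hstep : M * ∫ u in s..t, Real.exp (-(lam0 * (t - u))) ≤ M * (1/lam0) :=
        mul_le_mul_of_nonneg_left hexple hM
      refine hstep.trans ?_
      have h9 : (1:ℝ)/lam0 = (1/lam0) ^ β * (1/lam0) ^ (1 - β) := by
        rw [← Real.rpow_add (by positivity)]
        norm_num
      have h10 : (1/lam0) ^ β ≤ (t - s) ^ β :=
        Real.rpow_le_rpow (by positivity) hcase.le hβ0.le
      calc M * (1/lam0) = M * ((1/lam0) ^ β * (1/lam0) ^ (1 - β)) := by rw [← h9]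
        _ ≤ M * ((t - s) ^ β * (1/lam0) ^ (1 - β)) := by
            apply mul_le_mul_of_nonneg_left _ hM
            exact mul_le_mul_of_nonneg_right h10 (Real.rpow_nonneg (by positivity) _)
        _ = M * c1 * (t - s) ^ β := by rw [hc1def]; ring
  -- combine
  have hnorm : ‖X t - X s‖ ≤ (t - s) ^ β * s ^ (-β) * ‖x‖ + (M * (t - s) ^ β * K +
      M * c1 * (t - s) ^ β) := by
    rw [hdecomp]
    refine (norm_add_le _ _).trans ?_
    have h11 := norm_add_le (∫ u in (0:ℝ)..s, (S (t - u) (f u) - S (s - u) (f u)))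
      (∫ u in s..t, S (t - u) (f u))
    have := hA; have := hB; have := hD
    linarith
  refine hnorm.trans ?_
  have hP : (0:ℝ) ≤ (t - s) ^ β := Real.rpow_nonneg hts.le _
  have hq : (0:ℝ) ≤ s ^ (-β) := Real.rpow_nonneg hs0.le _
  have hnx : (0:ℝ) ≤ ‖x‖ := norm_nonneg x
  nlinarith [mul_nonneg hP hq, mul_nonneg (mul_nonneg hP hq) hnx, mul_nonneg hP hnx,
    mul_nonneg hM hK0, mul_nonneg hM hc10.le, mul_nonneg (mul_nonneg hM hK0) hP,
    mul_nonneg (mul_nonneg hM hc10.le) hP,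
    mul_nonneg (mul_nonneg (mul_nonneg hM hK0) hP) (mul_nonneg hq hnx),
    mul_nonneg (mul_nonneg (mul_nonneg hM hc10.le) hP) (mul_nonneg hq hnx),
    mul_nonneg (mul_nonneg hM hK0) (mul_nonneg hP hq),
    mul_nonneg (mul_nonneg hM hc10.le) (mul_nonneg hP hq),
    mul_nonneg (mul_nonneg hM hK0) (mul_nonneg hP hnx),
    mul_nonneg (mul_nonneg hM hc10.le) (mul_nonneg hP hnx)]

end
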